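/- Let G = (C, S, E) be a finite bipartite graph, w : C → ℤ>0 client weights, ℓ a natural number, and (x_0, …, x_ℓ) a fractional (w, 2^i)-nested matching hierarchy on G. Then for every real p ≥ 1, ∑_{s ∈ S} x_ℓ(δ(s))^p ≤ p·x_0(E) + ∑_{i=1}^{ℓ} p·2^{i(p−1)}·(x_i − x_{i−1})(E). -/

import Mathlib

/-- MVT-style bound: for `0 ≤ a ≤ b ≤ M` and `p ≥ 1`,
`b ^ p - a ^ p ≤ p * M ^ (p - 1) * (b - a)` (real powers). -/
lemma stmt3_key {a b M p : ℝ} (ha : 0 ≤ a) (hab : a ≤ b) (hbM : b ≤ M) (hp : 1 ≤ p) :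
    b ^ p - a ^ p ≤ p * M ^ (p - 1) * (b - a) := by
  rcases eq_or_lt_of_le hab with rfl | hlt
  · simp
  · obtain ⟨c, hc, hc'⟩ := exists_hasDerivAt_eq_slope (fun x : ℝ => x ^ p)
      (fun x : ℝ => p * x ^ (p - 1)) hlt
      ((continuous_id.rpow_const fun x => Or.inr (by linarith)).continuousOn)
      (fun x _ => Real.hasDerivAt_rpow_const (Or.inr hp))
    have hbne : b - a ≠ 0 := sub_ne_zero.mpr hlt.ne'
    have heq : b ^ p - a ^ p = p * c ^ (p - 1) * (b - a) :=
      (div_eq_iff hbne).mp hc'.symm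
    rw [heq]
    have hc0 : 0 ≤ c := le_of_lt (lt_of_le_of_lt ha hc.1)
    have hcM : c ^ (p - 1) ≤ M ^ (p - 1) :=
      Real.rpow_le_rpow hc0 (le_of_lt (lt_of_lt_of_le hc.2 hbM)) (by linarith)
    have hp0 : (0 : ℝ) ≤ p := by linarith
    have hba : (0 : ℝ) ≤ b - a := sub_nonneg.mpr hab
    nlinarith [mul_le_mul_of_nonneg_left hcM hp0]

/-- Telescoping bound for a nested sequence with caps `2 ^ i`. -/
lemma stmt3_aux (p : ℝ) (hp : 1 ≤ p) (g : ℕ → ℝ) :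
    ∀ n : ℕ, (∀ i ≤ n, 0 ≤ g i) → (∀ i < n, g i ≤ g (i + 1)) → (∀ i ≤ n, g i ≤ 2 ^ i) →
      g n ^ p ≤ p * g 0 +
        ∑ i ∈ Finset.Icc 1 n, p * (2 : ℝ) ^ ((i : ℝ) * (p - 1)) * (g i - g (i - 1)) := by
  intro n
  induction n with
  | zero =>
    intro hg _ hcap
    have h1 : g 0 ≤ 1 := by simpa using hcap 0 le_rfl
    have := stmt3_key (a := 0) (b := g 0) (M := 1) le_rfl (hg 0 le_rfl) h1 hp
    rw [Real.zero_rpow (by positivity), Real.one_rpow] at this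
    simp only [Finset.Icc_eq_empty_of_lt (by norm_num : (0:ℕ) < 1), Finset.sum_empty, add_zero]
    linarith
  | succ n ih =>
    intro hg hmono hcap
    have h1 := ih (fun i hi => hg i (by omega)) (fun i hi => hmono i (by omega))
      (fun i hi => hcap i (by omega))
    have hkey := stmt3_key (a := g n) (b := g (n + 1)) (M := (2 : ℝ) ^ (n + 1))
      (hg n (by omega)) (hmono n (by omega)) (hcap (n + 1) le_rfl) hp
    rw [Finset.sum_Icc_succ_top (by omega : 1 ≤ n + 1)]
    have hpow : (2 : ℝ) ^ (((n + 1 : ℕ) : ℝ) * (p - 1)) = ((2 : ℝ) ^ (n + 1)) ^ (p - 1) := by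
      rw [Real.rpow_mul (by norm_num), Real.rpow_natCast]
    rw [hpow]
    simp only [Nat.add_sub_cancel]
    linarith

/-- Upper bound on `∑_s x_ℓ(δ(s))^p` for a fractional `(w, 2^i)`-nested
matching hierarchy `(x_0, …, x_ℓ)` on a bipartite graph `G = (C, S, E)`. -/
theorem stmt_3 {C S : Type*} [Fintype C] [Fintype S] [DecidableEq C] [DecidableEq S]
    (E : Finset (C × S)) (w : C → ℤ) (hw : ∀ c, 0 < w c)
    (ℓ : ℕ) (x : ℕ → C × S → ℝ)
    (hnn : ∀ i ≤ ℓ, ∀ e, 0 ≤ x i e)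
    (hclient : ∀ i ≤ ℓ, ∀ c : C, ∑ e ∈ E.filter (fun e => e.1 = c), x i e ≤ (w c : ℝ))
    (hserver : ∀ i ≤ ℓ, ∀ s : S, ∑ e ∈ E.filter (fun e => e.2 = s), x i e ≤ 2 ^ i)
    (hnested : ∀ i, 1 ≤ i → i ≤ ℓ → ∀ e, x (i - 1) e ≤ x i e)
    (p : ℝ) (hp : 1 ≤ p) :
    ∑ s : S, (∑ e ∈ E.filter (fun e => e.2 = s), x ℓ e) ^ p
      ≤ p * (∑ e ∈ E, x 0 e) +
        ∑ i ∈ Finset.Icc 1 ℓ,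
          p * (2 : ℝ) ^ ((i : ℝ) * (p - 1)) * (∑ e ∈ E, (x i e - x (i - 1) e)) := by
  classical
  set y : ℕ → S → ℝ := fun i s => ∑ e ∈ E.filter (fun e => e.2 = s), x i e with hy
  have hbound : ∀ s : S, y ℓ s ^ p ≤ p * y 0 s +
      ∑ i ∈ Finset.Icc 1 ℓ, p * (2 : ℝ) ^ ((i : ℝ) * (p - 1)) * (y i s - y (i - 1) s) := by
    intro s
    refine stmt3_aux p hp (fun i => y i s) ℓ
      (fun i hi => Finset.sum_nonneg fun e _ => hnn i hi e)
      (fun i hi => Finset.sum_le_sum fun e _ => ?_)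
      (fun i hi => hserver i hi s)
    have := hnested (i + 1) (by omega) (by omega) e
    simpa using this
  calc ∑ s : S, y ℓ s ^ p
      ≤ ∑ s : S, (p * y 0 s +
          ∑ i ∈ Finset.Icc 1 ℓ, p * (2 : ℝ) ^ ((i : ℝ) * (p - 1)) * (y i s - y (i - 1) s)) :=
        Finset.sum_le_sum fun s _ => hbound s
    _ = p * (∑ e ∈ E, x 0 e) +
        ∑ i ∈ Finset.Icc 1 ℓ,
          p * (2 : ℝ) ^ ((i : ℝ) * (p - 1)) * (∑ e ∈ E, (x i e - x (i - 1) e)) := by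
        rw [Finset.sum_add_distrib, ← Finset.mul_sum, Finset.sum_comm]
        congr 1
        · rw [hy]; rw [Finset.sum_fiberwise]
        · refine Finset.sum_congr rfl fun i _ => ?_
          rw [← Finset.mul_sum]
          congr 1
          have hsub : ∀ s : S, y i s - y (i - 1) s =
              ∑ e ∈ E.filter (fun e => e.2 = s), (x i e - x (i - 1) e) := fun s =>
            (Finset.sum_sub_distrib _ _).symm
          simp_rw [hsub]
          exact Finset.sum_fiberwise _ _ _
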